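/- Let I ⊆ ℝ be an open interval, r_c ∈ I, and let f : I → ℝ be infinitely differentiable with f(r_c) > 0, f(r) < f(r_c) for all r ∈ I with r ≠ r_c, and f″(r_c) ≠ 0 (hence f″(r_c) < 0). Define ν : I → ℝ by ν(r) = √(1 − f(r)/f(r_c)) for r ≤ r_c and ν(r) = −√(1 − f(r)/f(r_c)) for r ≥ r_c. Then ν is infinitely differentiable on I, satisfies ν(r)² = 1 − f(r)/f(r_c) for all r ∈ I, and ν′(r_c) = −√(−f″(r_c)/(2 f(r_c))). -/

import Mathlib

open Set MeasureTheory intervalIntegral Metric Filter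
open scoped ContDiff

noncomputable def clamp01 (t : ℝ) : ℝ := max 0 (min t 1)

lemma clamp01_nonneg (t : ℝ) : 0 ≤ clamp01 t := le_max_left _ _
lemma clamp01_le_one (t : ℝ) : clamp01 t ≤ 1 := max_le zero_le_one (min_le_right _ _)
lemma clamp01_eq {t : ℝ} (h0 : 0 ≤ t) (h1 : t ≤ 1) : clamp01 t = t := by
  unfold clamp01; rw [min_eq_left h1, max_eq_right h0]
lemma continuous_clamp01 : Continuous clamp01 :=
  continuous_const.max (continuous_id.min continuous_const)

lemma convex_mem_uIcc {a r t : ℝ} (h0 : 0 ≤ t) (h1 : t ≤ 1) :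
    a + t * (r - a) ∈ Set.uIcc a r := by
  rcases le_total a r with h | h
  · rw [Set.uIcc_of_le h, Set.mem_Icc]; constructor <;> nlinarith
  · rw [Set.uIcc_of_ge h, Set.mem_Icc]; constructor <;> nlinarith

theorem hadamard_div {s : Set ℝ} (hs : IsOpen s) (hconn : s.OrdConnected) {g : ℝ → ℝ} {a : ℝ}
    (ha : a ∈ s) (hg : ContDiffOn ℝ (⊤ : ℕ∞) g s) (hga : g a = 0) :
    ∃ h : ℝ → ℝ, ContDiffOn ℝ (⊤ : ℕ∞) h s ∧ (∀ r ∈ s, g r = (r - a) * h r) ∧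
      h a = deriv g a := by
  set D : ℕ → ℝ → ℝ := fun n => deriv^[n] g with hDdef
  have hD : ∀ n, ContDiffOn ℝ (⊤ : ℕ∞) (D n) s := by
    intro n
    induction n with
    | zero => exact hg
    | succ n ih =>
      have : D (n + 1) = deriv (D n) := by
        simp only [hDdef, Function.iterate_succ_apply']
      rw [this]
      exact ((contDiffOn_infty_iff_deriv_of_isOpen hs).1 ih).2
  have hcont : ∀ n, ContinuousOn (D n) s := fun n => (hD n).continuousOn
  have hDeriv : ∀ n, ∀ x ∈ s, HasDerivAt (D n) (D (n + 1) x) x := by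
    intro n x hx
    have hdiff : DifferentiableAt ℝ (D n) x :=
      (((hD n).differentiableOn (by simp)) x hx).differentiableAt (hs.mem_nhds hx)
    have : D (n + 1) x = deriv (D n) x := by
      simp only [hDdef, Function.iterate_succ_apply']
    rw [this]
    exact hdiff.hasDerivAt
  have hmem : ∀ ⦃r⦄, r ∈ s → ∀ t : ℝ, a + clamp01 t * (r - a) ∈ s := fun r hr t =>
    hconn.uIcc_subset ha hr (convex_mem_uIcc (clamp01_nonneg t) (clamp01_le_one t))
  set F : ℕ → ℝ → ℝ :=
    fun n r => ∫ t in (0:ℝ)..1, clamp01 t ^ n * D (n + 1) (a + clamp01 t * (r - a)) with hFdef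
  -- continuity of t-slices
  have hslice : ∀ n, ∀ ⦃r⦄, r ∈ s →
      Continuous (fun t => clamp01 t ^ n * D (n + 1) (a + clamp01 t * (r - a))) := by
    intro n r hr
    refine (continuous_clamp01.pow n).mul ?_
    refine (hcont (n + 1)).comp_continuous ?_ (fun t => hmem hr t)
    exact continuous_const.add (continuous_clamp01.mul continuous_const)
  have hFcont : ∀ n, ContinuousOn (F n) s := by
    intro n
    rw [continuousOn_iff_continuous_restrict]
    have hu : Continuous (Function.uncurry fun (x : s) (t : ℝ) =>
        clamp01 t ^ n * D (n + 1) (a + clamp01 t * ((x : ℝ) - a))) := by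
      refine ((continuous_clamp01.comp continuous_snd).pow n).mul ?_
      refine (hcont (n + 1)).comp_continuous ?_ ?_
      · exact continuous_const.add ((continuous_clamp01.comp continuous_snd).mul
          ((continuous_subtype_val.comp continuous_fst).sub continuous_const))
      · rintro ⟨⟨x, hx⟩, t⟩; exact hmem hx t
    exact intervalIntegral.continuous_parametric_intervalIntegral_of_continuous' hu 0 1
  have hFderiv : ∀ n, ∀ x₀ ∈ s, HasDerivAt (F n) (F (n + 1) x₀) x₀ := by
    intro n x₀ hx₀
    obtain ⟨ε, εpos, hball⟩ : ∃ ε > 0, Metric.closedBall x₀ ε ⊆ s := by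
      obtain ⟨ε, εpos, h⟩ := Metric.isOpen_iff.1 hs x₀ hx₀
      exact ⟨ε / 2, by linarith, fun y hy =>
        h (lt_of_le_of_lt (mem_closedBall.1 hy) (by linarith))⟩
    set K : Set ℝ := Set.Icc (min a (x₀ - ε)) (max a (x₀ + ε)) with hKdef
    have hKs : K ⊆ s := by
      apply hconn.out
      · rcases le_total a (x₀ - ε) with h | h
        · rwa [min_eq_left h]
        · rw [min_eq_right h]
          exact hball (by rw [mem_closedBall, Real.dist_eq, abs_le]; constructor <;> linarith)
      · rcases le_total a (x₀ + ε) with h | h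
        · rw [max_eq_right h]
          exact hball (by rw [mem_closedBall, Real.dist_eq, abs_le]; constructor <;> linarith)
        · rwa [max_eq_left h]
    have haK : a ∈ K := ⟨min_le_left _ _, le_max_left _ _⟩
    have hmemK : ∀ x ∈ Metric.ball x₀ ε, ∀ t : ℝ, a + clamp01 t * (x - a) ∈ K := by
      intro x hx t
      have h1 : a + clamp01 t * (x - a) ∈ Set.uIcc a x :=
        convex_mem_uIcc (clamp01_nonneg t) (clamp01_le_one t)
      rw [Set.uIcc_eq_union] at h1
      rw [Real.ball_eq_Ioo] at hx
      rcases h1 with h1 | h1 <;> rw [Set.mem_Icc] at h1 ⊢ <;>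
        constructor <;>
        [ exact le_trans (min_le_left _ _) h1.1;
          exact le_trans h1.2 (le_trans (le_of_lt hx.2) (le_max_right _ _));
          exact le_trans (min_le_right _ _) (le_trans (le_of_lt hx.1) h1.1);
          exact le_trans h1.2 (le_max_left _ _)]
    obtain ⟨C, hC⟩ := isCompact_Icc.exists_bound_of_continuousOn ((hcont (n + 2)).mono hKs)
    have hballs : Metric.ball x₀ ε ⊆ s := fun y hy => hball (Metric.ball_subset_closedBall hy)
    have key := intervalIntegral.hasDerivAt_integral_of_dominated_loc_of_deriv_le
      (F := fun x t => clamp01 t ^ n * D (n + 1) (a + clamp01 t * (x - a)))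
      (F' := fun x t => clamp01 t ^ (n + 1) * D (n + 2) (a + clamp01 t * (x - a)))
      (x₀ := x₀) (a := (0:ℝ)) (b := 1) (μ := volume) (bound := fun _ => C)
      (Metric.ball_mem_nhds x₀ εpos)
      (Filter.eventually_of_mem (hs.mem_nhds hx₀)
        (fun x hx => ((hslice n hx).aestronglyMeasurable).restrict))
      ((hslice n hx₀).intervalIntegrable 0 1)
      (by
        have : Continuous fun t => clamp01 t ^ (n + 1) * D (n + 2) (a + clamp01 t * (x₀ - a)) := by
          refine (continuous_clamp01.pow (n + 1)).mul ?_
          refine (hcont (n + 2)).comp_continuous ?_ (fun t => hmem hx₀ t)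
          exact continuous_const.add (continuous_clamp01.mul continuous_const)
        exact this.aestronglyMeasurable.restrict)
      (Filter.Eventually.of_forall (fun t _ x hx => by
        have hK := hmemK x hx t
        have h1 : |clamp01 t ^ (n + 1)| ≤ 1 := by
          rw [abs_of_nonneg (pow_nonneg (clamp01_nonneg t) _)]
          exact pow_le_one₀ (clamp01_nonneg t) (clamp01_le_one t)
        have h2 := hC _ hK
        calc ‖clamp01 t ^ (n + 1) * D (n + 2) (a + clamp01 t * (x - a))‖
            = |clamp01 t ^ (n + 1)| * ‖D (n + 2) (a + clamp01 t * (x - a))‖ := by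
              rw [Real.norm_eq_abs, Real.norm_eq_abs, abs_mul]
          _ ≤ 1 * C := mul_le_mul h1 h2 (norm_nonneg _)
                (zero_le_one)
          _ = C := one_mul C))
      (intervalIntegrable_const)
      (Filter.Eventually.of_forall (fun t _ x hx => by
        have hu : HasDerivAt (fun x => a + clamp01 t * (x - a)) (clamp01 t) x := by
          simpa using (((hasDerivAt_id x).sub_const a).const_mul (clamp01 t)).const_add a
        have hd : HasDerivAt (D (n + 1)) (D (n + 2) (a + clamp01 t * (x - a)))
            (a + clamp01 t * (x - a)) := hDeriv (n + 1) _ (hmem (hballs hx) t)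
        have := (hd.comp x hu).const_mul (clamp01 t ^ n)
        refine this.congr_deriv ?_
        ring))
    exact key.2
  have hFsm : ∀ n, ContDiffOn ℝ (⊤ : ℕ∞) (F n) s := by
    have H : ∀ m : ℕ, ∀ n, ContDiffOn ℝ m (F n) s := by
      intro m
      induction m with
      | zero => intro n; exact contDiffOn_zero.2 (hFcont n)
      | succ m ih =>
        intro n
        have hcast : ((m + 1 : ℕ) : WithTop ℕ∞) = (m : WithTop ℕ∞) + 1 := by
          norm_cast
        rw [hcast, contDiffOn_succ_iff_deriv_of_isOpen hs]
        refine ⟨fun x hx => ((hFderiv n x hx).differentiableAt).differentiableWithinAt, ?_, ?_⟩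
        · intro hfalse; exact absurd hfalse (by simp)
        · exact (ih (n + 1)).congr (fun x hx => ((hFderiv n x hx).deriv).symm ▸ rfl)
    intro n
    exact contDiffOn_infty.2 (fun m => H m n)
  refine ⟨F 0, hFsm 0, ?_, ?_⟩
  · intro r hr
    have hftc : ∫ t in (0:ℝ)..1, (r - a) * D 1 (a + t * (r - a)) = g r - g a := by
      have : ∀ t ∈ Set.uIcc (0:ℝ) 1,
          HasDerivAt (fun t => g (a + t * (r - a))) ((r - a) * D 1 (a + t * (r - a))) t := by
        intro t ht
        rw [Set.uIcc_of_le zero_le_one] at ht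
        have hmem' : a + t * (r - a) ∈ s := hconn.uIcc_subset ha hr (convex_mem_uIcc ht.1 ht.2)
        have hu : HasDerivAt (fun t : ℝ => a + t * (r - a)) (r - a) t := by
          simpa using ((hasDerivAt_id t).mul_const (r - a)).const_add a
        have := (hDeriv 0 _ hmem').comp t hu
        refine this.congr_deriv ?_
        ring
      have hint : IntervalIntegrable (fun t => (r - a) * D 1 (a + t * (r - a))) volume 0 1 := by
        apply ContinuousOn.intervalIntegrable
        refine continuousOn_const.mul ((hcont 1).comp ?_ ?_)
        · exact (continuous_const.add (continuous_id.mul continuous_const)).continuousOn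
        · intro t ht
          rw [Set.uIcc_of_le zero_le_one] at ht
          exact hconn.uIcc_subset ha hr (convex_mem_uIcc ht.1 ht.2)
      have := intervalIntegral.integral_eq_sub_of_hasDerivAt this hint
      rw [this]
      norm_num
    have hcongr : F 0 r = ∫ t in (0:ℝ)..1, D 1 (a + t * (r - a)) := by
      apply intervalIntegral.integral_congr
      intro t ht
      rw [Set.uIcc_of_le zero_le_one] at ht
      simp [clamp01_eq ht.1 ht.2]
    have : (r - a) * F 0 r = g r := by
      rw [hcongr, ← intervalIntegral.integral_const_mul, hftc, hga, sub_zero]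
    linarith [this]
  · have : F 0 a = D 1 a := by
      have hcongr : F 0 a = ∫ _t in (0:ℝ)..1, D 1 a := by
        apply intervalIntegral.integral_congr
        intro t ht
        simp
      rw [hcongr, intervalIntegral.integral_const]
      norm_num
    rw [this]
    simp only [hDdef, Function.iterate_one]



/-- The function `ν`: `ν(r) = √(1 − f(r)/f(r_c))` for `r ≤ r_c` and
`ν(r) = −√(1 − f(r)/f(r_c))` for `r ≥ r_c`. -/
noncomputable def nuFun (f : ℝ → ℝ) (rc r : ℝ) : ℝ :=
  if r ≤ rc then Real.sqrt (1 - f r / f rc) else -Real.sqrt (1 - f r / f rc)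

/-- If `f` is smooth on an open interval `I`, attains a strict global maximum `f(r_c) > 0`
on `I` at `r_c ∈ I` with `f″(r_c) ≠ 0` (hence `f″(r_c) < 0`), then
`ν(r) = ∓√(1 − f(r)/f(r_c))` (for `±(r − r_c) ≥ 0`) is smooth on `I`, satisfies
`ν² = 1 − f/f(r_c)` on `I`, and `ν′(r_c) = −√(−f″(r_c)/(2 f(r_c)))`. -/
theorem nu_smooth (I : Set ℝ) (hIopen : IsOpen I) (hIconn : I.OrdConnected)
    (f : ℝ → ℝ) (rc : ℝ) (hrc : rc ∈ I)
    (hf : ContDiffOn ℝ (⊤ : ℕ∞) f I)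
    (hpos : 0 < f rc)
    (hmax : ∀ r ∈ I, r ≠ rc → f r < f rc)
    (hf'' : deriv (deriv f) rc ≠ 0) :
    deriv (deriv f) rc < 0 ∧
    ContDiffOn ℝ (⊤ : ℕ∞) (nuFun f rc) I ∧
    (∀ r ∈ I, nuFun f rc r ^ 2 = 1 - f r / f rc) ∧
    deriv (nuFun f rc) rc = -Real.sqrt (-(deriv (deriv f) rc) / (2 * f rc)) := by
  have hfne : f rc ≠ 0 := ne_of_gt hpos
  set g : ℝ → ℝ := fun r => 1 - f r / f rc with hgdef
  have hgs : ContDiffOn ℝ (⊤ : ℕ∞) g I := contDiffOn_const.sub (hf.div_const _)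
  have hg0 : g rc = 0 := by simp [hgdef, div_self hfne]
  have hgpos : ∀ r ∈ I, r ≠ rc → 0 < g r := by
    intro r hr hne
    have := hmax r hr hne
    simp only [hgdef, sub_pos]
    rw [div_lt_one hpos]
    exact this
  have hgnn : ∀ r ∈ I, 0 ≤ g r := by
    intro r hr
    rcases eq_or_ne r rc with h | h
    · rw [h, hg0]
    · exact le_of_lt (hgpos r hr h)
  have hlocmax : IsLocalMax f rc := by
    filter_upwards [hIopen.mem_nhds hrc] with r hr
    rcases eq_or_ne r rc with h | h
    · rw [h]
    · exact le_of_lt (hmax r hr h)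
  have hf'0 : deriv f rc = 0 := hlocmax.deriv_eq_zero
  have hgd : ∀ r ∈ I, HasDerivAt g (-(f rc)⁻¹ * deriv f r) r := by
    intro r hr
    have hfd : HasDerivAt f (deriv f r) r :=
      (((hf.differentiableOn (by simp)) r hr).differentiableAt (hIopen.mem_nhds hr)).hasDerivAt
    have := (hfd.div_const (f rc)).const_sub 1
    refine this.congr_deriv ?_
    ring
  obtain ⟨h₁, h₁sm, h₁eq, h₁a⟩ := hadamard_div hIopen hIconn hrc hgs hg0
  have h₁rc : h₁ rc = 0 := by
    rw [h₁a, (hgd rc hrc).deriv, hf'0, mul_zero]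
  obtain ⟨h, hsm, heq, hha⟩ := hadamard_div hIopen hIconn hrc h₁sm h₁rc
  have hsq : ∀ r ∈ I, g r = (r - rc) ^ 2 * h r := by
    intro r hr
    rw [h₁eq r hr, heq r hr]
    ring
  have h₁diff : ∀ r ∈ I, HasDerivAt h₁ (deriv h₁ r) r := fun r hr =>
    (((h₁sm.differentiableOn (by simp)) r hr).differentiableAt (hIopen.mem_nhds hr)).hasDerivAt
  have h₁dsm : ContDiffOn ℝ (⊤ : ℕ∞) (deriv h₁) I :=
    ((contDiffOn_infty_iff_deriv_of_isOpen hIopen).1 h₁sm).2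
  have h₁ddiff : HasDerivAt (deriv h₁) (deriv (deriv h₁) rc) rc :=
    (((h₁dsm.differentiableOn (by simp)) rc hrc).differentiableAt
      (hIopen.mem_nhds hrc)).hasDerivAt
  have hdg_eq : Set.EqOn (deriv g) (fun r => -(f rc)⁻¹ * deriv f r) I :=
    fun r hr => (hgd r hr).deriv
  have hIev : I ∈ nhds rc := hIopen.mem_nhds hrc
  have hfdsm : ContDiffOn ℝ (⊤ : ℕ∞) (deriv f) I :=
    ((contDiffOn_infty_iff_deriv_of_isOpen hIopen).1 hf).2
  have hfddiff : DifferentiableAt ℝ (deriv f) rc :=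
    ((hfdsm.differentiableOn (by simp)) rc hrc).differentiableAt hIev
  have hddg1 : deriv (deriv g) rc = -(f rc)⁻¹ * deriv (deriv f) rc := by
    have hev : deriv g =ᶠ[nhds rc] fun r => -(f rc)⁻¹ * deriv f r :=
      Filter.eventuallyEq_of_mem hIev hdg_eq
    rw [hev.deriv_eq]
    rw [deriv_const_mul _ hfddiff]
  have hdg2 : ∀ r ∈ I, deriv g r = h₁ r + (r - rc) * deriv h₁ r := by
    intro r hr
    have hprod : HasDerivAt (fun x => (x - rc) * h₁ x)
        (1 * h₁ r + (r - rc) * deriv h₁ r) r :=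
      ((hasDerivAt_id r).sub_const rc).mul (h₁diff r hr)
    have hev : g =ᶠ[nhds r] fun x => (x - rc) * h₁ x :=
      Filter.eventuallyEq_of_mem (hIopen.mem_nhds hr) (fun x hx => h₁eq x hx)
    have hgda := hprod.congr_of_eventuallyEq hev
    rw [hgda.deriv]
    ring
  have hddg2 : deriv (deriv g) rc = 2 * deriv h₁ rc := by
    have hev : deriv g =ᶠ[nhds rc] fun r => h₁ r + (r - rc) * deriv h₁ r :=
      Filter.eventuallyEq_of_mem hIev (fun r hr => hdg2 r hr)
    rw [hev.deriv_eq]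
    have hprod : HasDerivAt (fun r => h₁ r + (r - rc) * deriv h₁ r)
        (deriv h₁ rc + (1 * deriv h₁ rc + (rc - rc) * deriv (deriv h₁) rc)) rc :=
      (h₁diff rc hrc).add (((hasDerivAt_id rc).sub_const rc).mul h₁ddiff)
    rw [hprod.deriv]
    ring
  have hval : h rc = -(deriv (deriv f) rc) / (2 * f rc) := by
    rw [hha]
    have h2 : 2 * deriv h₁ rc = -(f rc)⁻¹ * deriv (deriv f) rc := by
      rw [← hddg2, hddg1]
    field_simp at h2 ⊢
    linarith
  have hhcont : ContinuousAt h rc := (hsm.continuousOn.continuousAt hIev)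
  have hhpos' : ∀ r ∈ I, r ≠ rc → 0 < h r := by
    intro r hr hne
    have h1 : 0 < g r := hgpos r hr hne
    have h2 : g r = (r - rc) ^ 2 * h r := hsq r hr
    have hne' : r - rc ≠ 0 := sub_ne_zero.2 hne
    have h3 : (0:ℝ) < (r - rc) ^ 2 := by positivity
    nlinarith
  have hhnn : 0 ≤ h rc := by
    have htend : Filter.Tendsto h (nhdsWithin rc {rc}ᶜ) (nhds (h rc)) :=
      hhcont.continuousWithinAt.tendsto
    refine ge_of_tendsto htend ?_
    filter_upwards [self_mem_nhdsWithin,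
      mem_nhdsWithin_of_mem_nhds hIev] with r hr hrI
    exact le_of_lt (hhpos' r hrI hr)
  have hhrc : 0 < h rc := by
    rcases lt_or_eq_of_le hhnn with h' | h'
    · exact h'
    · exfalso
      apply hf''
      have h3 : -(deriv (deriv f) rc) / (2 * f rc) = 0 := by rw [← hval, ← h']
      field_simp at h3
      linarith
  have hf''neg : deriv (deriv f) rc < 0 := by
    have h1 : -(deriv (deriv f) rc) / (2 * f rc) > 0 := hval ▸ hhrc
    have h2 : (0:ℝ) < 2 * f rc := by linarith
    have h3 := mul_pos h1 h2
    rw [div_mul_cancel₀ _ (ne_of_gt h2)] at h3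
    linarith
  have hposev : ∀ᶠ r in nhds rc, 0 < h r :=
    hhcont.eventually (eventually_gt_nhds hhrc)
  have hev_rc : nuFun f rc =ᶠ[nhds rc] fun r => -((r - rc) * Real.sqrt (h r)) := by
    filter_upwards [hposev, hIev] with r hhr hrI
    have hgr : 1 - f r / f rc = (r - rc) ^ 2 * h r := hsq r hrI
    have hs : Real.sqrt (1 - f r / f rc) = |r - rc| * Real.sqrt (h r) := by
      rw [hgr, Real.sqrt_mul (sq_nonneg _), Real.sqrt_sq_eq_abs]
    unfold nuFun
    split_ifs with hc
    · rw [hs, abs_of_nonpos (sub_nonpos.2 hc)]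
      ring
    · rw [hs, abs_of_pos (sub_pos.2 (not_le.1 hc))]
  refine ⟨hf''neg, ?_, ?_, ?_⟩
  · intro x hx
    rcases lt_trichotomy x rc with hlt | heqx | hgt
    · have hne : x ≠ rc := ne_of_lt hlt
      have hgx : g x ≠ 0 := ne_of_gt (hgpos x hx hne)
      have hc : ContDiffAt ℝ (⊤ : ℕ∞) (fun r => Real.sqrt (g r)) x :=
        (Real.contDiffAt_sqrt hgx).comp x (hgs.contDiffAt (hIopen.mem_nhds hx))
      have hev : nuFun f rc =ᶠ[nhds x] fun r => Real.sqrt (g r) := by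
        filter_upwards [Iio_mem_nhds hlt] with r hr
        have : r ≤ rc := le_of_lt (Set.mem_Iio.1 hr)
        simp only [nuFun, if_pos this]
        rfl
      exact (hc.congr_of_eventuallyEq hev).contDiffWithinAt
    · subst heqx
      have hc : ContDiffAt ℝ (⊤ : ℕ∞) (fun r => -((r - x) * Real.sqrt (h r))) x := by
        refine ContDiffAt.neg ?_
        exact (contDiffAt_id.sub contDiffAt_const).mul
          ((Real.contDiffAt_sqrt (ne_of_gt hhrc)).comp x (hsm.contDiffAt hIev))
      exact (hc.congr_of_eventuallyEq hev_rc).contDiffWithinAt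
    · have hne : x ≠ rc := ne_of_gt hgt
      have hgx : g x ≠ 0 := ne_of_gt (hgpos x hx hne)
      have hc : ContDiffAt ℝ (⊤ : ℕ∞) (fun r => -Real.sqrt (g r)) x :=
        ((Real.contDiffAt_sqrt hgx).comp x (hgs.contDiffAt (hIopen.mem_nhds hx))).neg
      have hev : nuFun f rc =ᶠ[nhds x] fun r => -Real.sqrt (g r) := by
        filter_upwards [Ioi_mem_nhds hgt] with r hr
        have : ¬ r ≤ rc := not_le.2 (Set.mem_Ioi.1 hr)
        simp only [nuFun, if_neg this]
        rfl
      exact (hc.congr_of_eventuallyEq hev).contDiffWithinAt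
  · intro r hr
    have := hgnn r hr
    unfold nuFun
    split_ifs
    · exact Real.sq_sqrt this
    · rw [neg_pow, Real.sq_sqrt this]
      ring
  · rw [hev_rc.deriv_eq]
    have hsqrt : HasDerivAt (fun r => Real.sqrt (h r))
        (deriv (fun r => Real.sqrt (h r)) rc) rc := by
      have hcd : ContDiffAt ℝ (⊤ : ℕ∞) (fun r => Real.sqrt (h r)) rc :=
        (Real.contDiffAt_sqrt (ne_of_gt hhrc)).comp rc (hsm.contDiffAt hIev)
      exact (hcd.differentiableAt (by simp)).hasDerivAt
    have hprod : HasDerivAt (fun r => -((r - rc) * Real.sqrt (h r)))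
        (-(1 * Real.sqrt (h rc) + (rc - rc) * deriv (fun r => Real.sqrt (h r)) rc)) rc :=
      (((hasDerivAt_id rc).sub_const rc).mul hsqrt).neg
    rw [hprod.deriv, hval]
    simp
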